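/- Let 1 < ℓ < 2/√3 and let H be the regular hexagon centered at the origin circumscribed about the unit disk B² in E². Then vol_2(H ∩ ℓB²) = ℓ²(π − 6·arccos(1/ℓ)) + 6√(ℓ² − 1). -/

import Mathlib

open MeasureTheory Metric

/-- The regular hexagon centered at the origin circumscribed about the unit disk `B²`
(inradius `1`, circumradius `2/√3`): the convex hull of its six vertices. -/
noncomputable def regularHexagon : Set (EuclideanSpace ℝ (Fin 2)) :=
  convexHull ℝ (Set.range fun k : Fin 6 =>
    (WithLp.equiv 2 (Fin 2 → ℝ)).symm
      ![2 / Real.sqrt 3 * Real.cos ((k : ℝ) * (Real.pi / 3)),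
        2 / Real.sqrt 3 * Real.sin ((k : ℝ) * (Real.pi / 3))])

open Set Real

namespace HexAux

lemma cos_int_mul_pi_div_three (n : ℤ) :
    Real.cos ((n : ℝ) * (π/3)) = Real.cos (((n % 6 : ℤ) : ℝ) * (π/3)) := by
  have h : (n : ℝ) * (π/3) = ((n % 6 : ℤ) : ℝ) * (π/3) + ((n / 6 : ℤ) : ℝ) * (2 * π) := by
    have e2 : 6 * ((n / 6 : ℤ) : ℝ) + ((n % 6 : ℤ) : ℝ) = (n : ℝ) := by
      exact_mod_cast congrArg (Int.cast : ℤ → ℝ) (Int.mul_ediv_add_emod n 6)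
    linear_combination (-(π/3)) * e2
  rw [h, Real.cos_add_int_mul_two_pi]

lemma cos_odd_mul_pi_div_three (n : ℤ) (hn : Odd n) : Real.cos ((n : ℝ) * (π/3)) ≤ 1/2 := by
  rw [cos_int_mul_pi_div_three]
  have h0 : (0:ℤ) ≤ n % 6 := Int.emod_nonneg n (by norm_num)
  have h6 : n % 6 < 6 := Int.emod_lt_of_pos n (by norm_num)
  obtain ⟨m, hm⟩ := hn
  have hodd : n % 6 = 1 ∨ n % 6 = 3 ∨ n % 6 = 5 := by omega
  rcases hodd with h | h | h <;> rw [h] <;> push_cast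
  · rw [one_mul, Real.cos_pi_div_three]
  · rw [show (3:ℝ) * (π/3) = π by ring, Real.cos_pi]; norm_num
  · rw [show (5:ℝ) * (π/3) = -(π/3) + 2*π by ring, Real.cos_add_two_pi, Real.cos_neg,
      Real.cos_pi_div_three]

lemma cos_ne_zero_mod_six (n : ℤ) (hn : n % 6 ≠ 0) : Real.cos ((n : ℝ) * (π/3)) ≤ 1/2 := by
  rw [cos_int_mul_pi_div_three]
  have h0 : (0:ℤ) ≤ n % 6 := Int.emod_nonneg n (by norm_num)
  have h6 : n % 6 < 6 := Int.emod_lt_of_pos n (by norm_num)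
  have hc : n % 6 = 1 ∨ n % 6 = 2 ∨ n % 6 = 3 ∨ n % 6 = 4 ∨ n % 6 = 5 := by omega
  have c2 : Real.cos (2 * (π/3)) = -(1/2) := by
    rw [show (2:ℝ) * (π/3) = π - π/3 by ring, Real.cos_pi_sub, Real.cos_pi_div_three]
  rcases hc with h | h | h | h | h <;> rw [h] <;> push_cast
  · rw [one_mul, Real.cos_pi_div_three]
  · rw [c2]; norm_num
  · rw [show (3:ℝ) * (π/3) = π by ring, Real.cos_pi]; norm_num
  · rw [show (4:ℝ) * (π/3) = -(2*(π/3)) + 2*π by ring, Real.cos_add_two_pi, Real.cos_neg, c2]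
    norm_num
  · rw [show (5:ℝ) * (π/3) = -(π/3) + 2*π by ring, Real.cos_add_two_pi, Real.cos_neg,
      Real.cos_pi_div_three]

lemma cos_shifted_le (m : ℤ) : Real.cos ((m : ℝ) * (π/3) + π/6) ≤ Real.sqrt 3 / 2 := by
  set t := (m : ℝ) * (π/3) + π/6 with ht
  have h2t : Real.cos (2*t) ≤ 1/2 := by
    have : 2*t = ((2*m+1 : ℤ) : ℝ) * (π/3) := by push_cast; ring
    rw [this]
    exact cos_odd_mul_pi_div_three _ ⟨m, by ring⟩
  have hsq : Real.cos t ^ 2 ≤ 3/4 := by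
    have := Real.cos_sq t
    nlinarith [Real.cos_sq t]
  calc Real.cos t ≤ |Real.cos t| := le_abs_self _
    _ = Real.sqrt (Real.cos t ^ 2) := by rw [Real.sqrt_sq_eq_abs]
    _ ≤ Real.sqrt (3/4) := Real.sqrt_le_sqrt hsq
    _ = Real.sqrt 3 / 2 := by
        rw [show (3:ℝ)/4 = 3/2^2 by norm_num, Real.sqrt_div' , Real.sqrt_sq] <;> norm_num

noncomputable def RR : ℝ := 2 / Real.sqrt 3

lemma sqrt3_pos : (0:ℝ) < Real.sqrt 3 := Real.sqrt_pos.2 (by norm_num)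
lemma sq_sqrt3 : Real.sqrt 3 ^ 2 = 3 := Real.sq_sqrt (by norm_num)
lemma RR_pos : 0 < RR := div_pos (by norm_num) sqrt3_pos
lemma RR_cos : RR * (Real.sqrt 3 / 2) = 1 := by
  unfold RR; field_simp

noncomputable def vtx (j : ℤ) : ℝ × ℝ :=
  (RR * Real.cos ((j : ℝ) * (π/3)), RR * Real.sin ((j : ℝ) * (π/3)))

noncomputable def nrm (j : ℤ) : ℝ × ℝ :=
  (Real.cos ((j : ℝ) * (π/3) + π/6), Real.sin ((j : ℝ) * (π/3) + π/6))

def dott (u p : ℝ × ℝ) : ℝ := u.1 * p.1 + u.2 * p.2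
def cross (u p : ℝ × ℝ) : ℝ := u.1 * p.2 - u.2 * p.1

lemma vtx_add_six (j : ℤ) : vtx (j + 6) = vtx j := by
  unfold vtx
  have h : ((j + 6 : ℤ) : ℝ) * (π/3) = (j : ℝ) * (π/3) + (1:ℤ) * (2 * π) := by push_cast; ring
  rw [h, Real.cos_add_int_mul_two_pi, Real.sin_add_int_mul_two_pi]

lemma vtx_add_three (j : ℤ) : vtx (j + 3) = -vtx j := by
  unfold vtx
  have h : ((j + 3 : ℤ) : ℝ) * (π/3) = (j : ℝ) * (π/3) + π := by push_cast; ring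
  rw [h, Real.cos_add_pi, Real.sin_add_pi, Prod.neg_mk]
  ring_nf

lemma nrm_add_six (j : ℤ) : nrm (j + 6) = nrm j := by
  unfold nrm
  have h : ((j + 6 : ℤ) : ℝ) * (π/3) + π/6 = ((j : ℝ) * (π/3) + π/6) + (1:ℤ) * (2 * π) := by
    push_cast; ring
  rw [h, Real.cos_add_int_mul_two_pi, Real.sin_add_int_mul_two_pi]

lemma dott_nrm_vtx_self (j : ℤ) : dott (nrm j) (vtx j) = 1 := by
  unfold dott nrm vtx
  have h : Real.cos ((j:ℝ)*(π/3) + π/6) * (RR * Real.cos ((j:ℝ)*(π/3)))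
      + Real.sin ((j:ℝ)*(π/3) + π/6) * (RR * Real.sin ((j:ℝ)*(π/3)))
      = RR * Real.cos (((j:ℝ)*(π/3) + π/6) - (j:ℝ)*(π/3)) := by
    rw [Real.cos_sub]; ring
  rw [h, show ((j:ℝ)*(π/3) + π/6) - (j:ℝ)*(π/3) = π/6 by ring, Real.cos_pi_div_six, RR_cos]

lemma dott_nrm_vtx_succ (j : ℤ) : dott (nrm j) (vtx (j+1)) = 1 := by
  unfold dott nrm vtx
  have h : Real.cos ((j:ℝ)*(π/3) + π/6) * (RR * Real.cos (((j+1:ℤ):ℝ)*(π/3)))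
      + Real.sin ((j:ℝ)*(π/3) + π/6) * (RR * Real.sin (((j+1:ℤ):ℝ)*(π/3)))
      = RR * Real.cos (((j:ℝ)*(π/3) + π/6) - ((j+1:ℤ):ℝ)*(π/3)) := by
    rw [Real.cos_sub]; ring
  rw [h, show ((j:ℝ)*(π/3) + π/6) - ((j+1:ℤ):ℝ)*(π/3) = -(π/6) by push_cast; ring,
    Real.cos_neg, Real.cos_pi_div_six, RR_cos]

lemma dott_nrm_vtx_le (k j : ℤ) : dott (nrm k) (vtx j) ≤ 1 := by
  unfold dott nrm vtx
  have h : Real.cos ((k:ℝ)*(π/3) + π/6) * (RR * Real.cos ((j:ℝ)*(π/3)))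
      + Real.sin ((k:ℝ)*(π/3) + π/6) * (RR * Real.sin ((j:ℝ)*(π/3)))
      = RR * Real.cos (((k - j : ℤ):ℝ)*(π/3) + π/6) := by
    rw [show ((k - j : ℤ):ℝ)*(π/3) + π/6 = ((k:ℝ)*(π/3) + π/6) - (j:ℝ)*(π/3) by push_cast; ring,
      Real.cos_sub]
    ring
  rw [h, ← RR_cos]
  exact mul_le_mul_of_nonneg_left (cos_shifted_le _) RR_pos.le

lemma dott_nrm_nrm (k m : ℤ) : dott (nrm k) (nrm m) = Real.cos (((k - m : ℤ):ℝ) * (π/3)) := by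
  unfold dott nrm
  rw [show ((k - m : ℤ):ℝ)*(π/3) = ((k:ℝ)*(π/3) + π/6) - ((m:ℝ)*(π/3) + π/6) by push_cast; ring,
    Real.cos_sub]

lemma cross_vtx_succ (j : ℤ) : cross (vtx j) (vtx (j+1)) = RR^2 * (Real.sqrt 3 / 2) := by
  unfold cross vtx
  have h : RR * Real.cos ((j:ℝ)*(π/3)) * (RR * Real.sin (((j+1:ℤ):ℝ)*(π/3)))
      - RR * Real.sin ((j:ℝ)*(π/3)) * (RR * Real.cos (((j+1:ℤ):ℝ)*(π/3)))
      = RR^2 * Real.sin (((j+1:ℤ):ℝ)*(π/3) - (j:ℝ)*(π/3)) := by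
    rw [Real.sin_sub]; ring
  rw [h, show ((j+1:ℤ):ℝ)*(π/3) - (j:ℝ)*(π/3) = π/3 by push_cast; ring, Real.sin_pi_div_three]

/-- Cramer decomposition: every point is a combination of two consecutive vertices. -/
lemma cramer (j : ℤ) (p : ℝ × ℝ) :
    p = (cross p (vtx (j+1)) / (RR^2 * (Real.sqrt 3 / 2))) • vtx j
      + (cross (vtx j) p / (RR^2 * (Real.sqrt 3 / 2))) • vtx (j+1) := by
  have hC : cross (vtx j) (vtx (j+1)) = RR^2 * (Real.sqrt 3 / 2) := cross_vtx_succ j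
  have hC0 : (RR^2 * (Real.sqrt 3 / 2)) ≠ 0 :=
    ne_of_gt (mul_pos (pow_pos RR_pos 2) (by positivity))
  have key : ∀ u v q : ℝ × ℝ, (cross u v) • q = (cross q v) • u + (cross u q) • v := by
    intro u v q
    unfold cross
    apply Prod.ext <;> simp [Prod.smul_fst, Prod.smul_snd, smul_eq_mul] <;> ring
  have := key (vtx j) (vtx (j+1)) p
  rw [hC] at this
  have h2 : p = (RR^2 * (Real.sqrt 3 / 2))⁻¹ • (cross p (vtx (j+1)) • vtx j
      + cross (vtx j) p • vtx (j+1)) := by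
    rw [← this, inv_smul_smul₀ hC0]
  conv_lhs => rw [h2]
  rw [smul_add, smul_smul, smul_smul, inv_mul_eq_div, inv_mul_eq_div]

noncomputable def Vfin : Fin 6 → ℝ × ℝ := fun k => vtx (k : ℤ)

noncomputable def Hhull : Set (ℝ × ℝ) := convexHull ℝ (Set.range Vfin)

lemma cross_antisymm (u v : ℝ × ℝ) : cross u v = -cross v u := by unfold cross; ring

lemma cross_neg_left (u v : ℝ × ℝ) : cross (-u) v = -cross u v := by
  unfold cross; simp; ring

lemma dott_combo (u v w : ℝ × ℝ) (x y : ℝ) :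
    dott u (x • v + y • w) = x * dott u v + y * dott u w := by
  unfold dott
  simp [Prod.fst_add, Prod.snd_add, smul_eq_mul]
  ring

lemma isLinearMap_dott (u : ℝ × ℝ) : IsLinearMap ℝ (dott u) := by
  constructor
  · intro p q; unfold dott; simp [Prod.fst_add, Prod.snd_add]; ring
  · intro c p; unfold dott; simp [smul_eq_mul]; ring

lemma exists_sector (p : ℝ × ℝ) :
    ∃ j : ℤ, 0 ≤ j ∧ j < 6 ∧ 0 ≤ cross (vtx j) p ∧ cross (vtx (j+1)) p ≤ 0 := by
  set t : ℤ → ℝ := fun j => cross (vtx j) p with ht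
  have hflip : ∀ j : ℤ, t (j + 3) = -t j := by
    intro j; simp only [ht]; rw [vtx_add_three, cross_neg_left]
  have h6 : t 6 = t 0 := by
    simp only [ht]; rw [show (6:ℤ) = 0 + 6 by ring, vtx_add_six]
  rcases le_or_gt 0 (t 0) with h0 | h0
  · rcases le_or_gt (t 1) 0 with h1 | h1
    · exact ⟨0, by norm_num, by norm_num, h0, by simpa using h1⟩
    · rcases le_or_gt (t 2) 0 with h2 | h2
      · exact ⟨1, by norm_num, by norm_num, h1.le, by simpa using h2⟩
      · refine ⟨2, by norm_num, by norm_num, h2.le, ?_⟩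
        have := hflip 0
        simp only [show (0:ℤ)+3 = 3 by ring] at this
        show t (2+1) ≤ 0
        rw [show (2:ℤ)+1 = 3 by ring, this]
        linarith
  · have h3 : 0 ≤ t 3 := by
      have := hflip 0
      simp only [show (0:ℤ)+3 = 3 by ring] at this
      rw [this]; linarith
    rcases le_or_gt (t 4) 0 with h4 | h4
    · exact ⟨3, by norm_num, by norm_num, h3, by simpa using h4⟩
    · rcases le_or_gt (t 5) 0 with h5 | h5
      · exact ⟨4, by norm_num, by norm_num, h4.le, by simpa using h5⟩
      · refine ⟨5, by norm_num, by norm_num, h5.le, ?_⟩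
        show t (5+1) ≤ 0
        rw [show (5:ℤ)+1 = 6 by ring, h6]
        linarith

lemma vtx_mem_Hhull (j : ℤ) (h0 : 0 ≤ j) (h6 : j < 7) : vtx j ∈ Hhull := by
  have : ∀ k : Fin 6, Vfin k ∈ Hhull := fun k => subset_convexHull ℝ _ (mem_range_self k)
  rcases eq_or_lt_of_le (show j ≤ 6 by omega) with h | h
  · have h0 := this 0
    have hv : Vfin 0 = vtx 0 := by norm_num [Vfin]
    rw [hv] at h0
    rw [h, show (6:ℤ) = 0 + 6 by ring, vtx_add_six]
    exact h0
  · have hk : ((⟨j.toNat, by omega⟩ : Fin 6) : ℤ) = j := by simp; omega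
    have := this ⟨j.toNat, by omega⟩
    rwa [Vfin, hk] at this

lemma zero_mem_Hhull : (0 : ℝ × ℝ) ∈ Hhull := by
  have hconv := convex_convexHull ℝ (Set.range Vfin)
  have h0 : vtx 0 ∈ Hhull := vtx_mem_Hhull 0 (by norm_num) (by norm_num)
  have h3 : vtx 3 ∈ Hhull := vtx_mem_Hhull 3 (by norm_num) (by norm_num)
  have := hconv h0 h3 (by norm_num : (0:ℝ) ≤ 1/2) (by norm_num : (0:ℝ) ≤ 1/2) (by norm_num)
  rwa [show vtx 3 = -vtx 0 from by rw [show (3:ℤ) = 0+3 by ring, vtx_add_three],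
    smul_neg, add_neg_cancel] at this

lemma mem_Hhull_of_halfplanes (p : ℝ × ℝ) (hp : ∀ k : Fin 6, dott (nrm (k : ℤ)) p ≤ 1) :
    p ∈ Hhull := by
  obtain ⟨j, hj0, hj6, hb', ha'⟩ := exists_sector p
  set C : ℝ := RR^2 * (Real.sqrt 3 / 2) with hCdef
  have hCpos : 0 < C := mul_pos (pow_pos RR_pos 2) (by positivity)
  set a : ℝ := cross p (vtx (j+1)) / C with hadef
  set b : ℝ := cross (vtx j) p / C with hbdef
  have ha : 0 ≤ a := by
    apply div_nonneg _ hCpos.le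
    rw [cross_antisymm]; linarith
  have hb : 0 ≤ b := div_nonneg hb' hCpos.le
  have hp' : p = a • vtx j + b • vtx (j+1) := cramer j p
  have hab : a + b ≤ 1 := by
    have hk : ((⟨j.toNat, by omega⟩ : Fin 6) : ℤ) = j := by simp; omega
    have hcon := hp ⟨j.toNat, by omega⟩
    rw [hk] at hcon
    calc a + b = a * dott (nrm j) (vtx j) + b * dott (nrm j) (vtx (j+1)) := by
          rw [dott_nrm_vtx_self, dott_nrm_vtx_succ]; ring
      _ = dott (nrm j) p := by rw [hp', dott_combo]
      _ ≤ 1 := hcon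
  have hvj : vtx j ∈ Hhull := vtx_mem_Hhull j hj0 (by omega)
  have hvj1 : vtx (j+1) ∈ Hhull := vtx_mem_Hhull (j+1) (by omega) (by omega)
  have hconv := convex_convexHull ℝ (Set.range Vfin)
  by_cases hab0 : a + b = 0
  · have ha0 : a = 0 := by linarith
    have hb0 : b = 0 := by linarith
    rw [hp', ha0, hb0]
    simpa using zero_mem_Hhull
  · have hs : 0 < a + b := lt_of_le_of_ne (by linarith) (Ne.symm hab0)
    have hq : (a/(a+b)) • vtx j + (b/(a+b)) • vtx (j+1) ∈ Hhull :=
      hconv hvj hvj1 (div_nonneg ha hs.le) (div_nonneg hb hs.le) (by field_simp)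
    have hfin := hconv hq zero_mem_Hhull (by linarith : (0:ℝ) ≤ a + b)
      (by linarith : (0:ℝ) ≤ 1 - (a+b)) (by ring)
    rw [smul_zero, add_zero, smul_add, smul_smul, smul_smul,
      mul_div_cancel₀ _ hab0, mul_div_cancel₀ _ hab0, ← hp'] at hfin
    exact hfin

lemma Hhull_eq_iInter : Hhull = ⋂ k : Fin 6, {p : ℝ × ℝ | dott (nrm (k : ℤ)) p ≤ 1} := by
  apply Set.Subset.antisymm
  · apply convexHull_min
    · rintro _ ⟨k, rfl⟩
      exact Set.mem_iInter.2 fun m => dott_nrm_vtx_le _ _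
    · exact convex_iInter fun k => convex_halfSpace_le (isLinearMap_dott _) 1
  · intro p hp
    exact mem_Hhull_of_halfplanes p fun k => Set.mem_iInter.1 hp k

def Sseg (ll a : ℝ) : Set (ℝ × ℝ) := {p | p.1^2 + p.2^2 ≤ ll^2 ∧ a < p.1}

def Dset (ll : ℝ) : Set (ℝ × ℝ) := {p | p.1^2 + p.2^2 ≤ ll^2}

lemma measurableSet_Dset (ll : ℝ) : MeasurableSet (Dset ll) := by
  apply measurableSet_le (by fun_prop) measurable_const

lemma measurableSet_Sseg (ll a : ℝ) : MeasurableSet (Sseg ll a) := by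
  have : Sseg ll a = Dset ll ∩ {p : ℝ × ℝ | a < p.1} := rfl
  rw [this]
  exact (measurableSet_Dset ll).inter (measurableSet_lt measurable_const (by fun_prop))

lemma volume_Sseg_integral (ll a : ℝ) (hl : 0 < ll) (ha : -ll ≤ a) (ha' : a ≤ ll) :
    volume (Sseg ll a) = ENNReal.ofReal (∫ x in a..ll, 2 * Real.sqrt (ll^2 - x^2)) := by
  have hslice : ∀ x : ℝ, volume (Prod.mk x ⁻¹' Sseg ll a)
      = (Ioc a ll).indicator (fun x => ENNReal.ofReal (2 * Real.sqrt (ll^2 - x^2))) x := by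
    intro x
    by_cases hx : a < x ∧ x ≤ ll
    · have hc : 0 ≤ ll^2 - x^2 := by nlinarith [hx.1, hx.2, ha]
      have hpre : Prod.mk x ⁻¹' Sseg ll a
          = Icc (-Real.sqrt (ll^2 - x^2)) (Real.sqrt (ll^2 - x^2)) := by
        ext y
        simp only [Sseg, mem_preimage, mem_setOf_eq, mem_Icc, hx.1, and_true]
        constructor
        · intro h
          have hy : |y| ≤ Real.sqrt (ll^2 - x^2) := by
            rw [← Real.sqrt_sq_eq_abs]
            exact Real.sqrt_le_sqrt (by nlinarith)
          exact abs_le.1 hy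
        · intro h
          have hy : |y| ≤ Real.sqrt (ll^2 - x^2) := abs_le.2 h
          have := Real.sq_sqrt hc
          nlinarith [sq_abs y, pow_le_pow_left₀ (abs_nonneg y) hy 2]
      rw [hpre, Real.volume_Icc, indicator_of_mem (mem_Ioc.2 hx)]
      congr 1
      ring
    · have hpre : Prod.mk x ⁻¹' Sseg ll a = ∅ := by
        ext y
        simp only [Sseg, mem_preimage, mem_setOf_eq, mem_empty_iff_false, iff_false, not_and]
        intro h1 h2
        rcases not_and_or.1 hx with h | h
        · exact h h2
        · push_neg at h
          nlinarith
      rw [hpre, indicator_of_notMem (fun hm => hx ⟨hm.1, hm.2⟩)]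
      simp
  rw [Measure.volume_eq_prod, Measure.prod_apply (measurableSet_Sseg ll a)]
  rw [lintegral_congr hslice, lintegral_indicator measurableSet_Ioc]
  rw [← ofReal_integral_eq_lintegral_ofReal]
  · rw [intervalIntegral.integral_of_le ha']
  · exact Continuous.integrableOn_Ioc
      (continuous_const.mul (Real.continuous_sqrt.comp (by fun_prop)))
  · exact Filter.Eventually.of_forall fun x => by positivity

lemma integral_sqrt_seg (ll a : ℝ) (hl : 0 < ll) (ha : -ll ≤ a) (ha' : a ≤ ll) :
    ∫ x in a..ll, 2 * Real.sqrt (ll^2 - x^2)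
      = ll^2 * (π/2) - (a * Real.sqrt (ll^2 - a^2) + ll^2 * Real.arcsin (a/ll)) := by
  set F : ℝ → ℝ := fun x => x * Real.sqrt (ll^2 - x^2) + ll^2 * Real.arcsin (x/ll) with hF
  have hsc : Continuous fun x : ℝ => Real.sqrt (ll^2 - x^2) :=
    Real.continuous_sqrt.comp (by fun_prop)
  have hFc : Continuous F :=
    (continuous_id.mul hsc).add
      (continuous_const.mul (Real.continuous_arcsin.comp (by fun_prop)))
  have hcont : ContinuousOn F (Icc a ll) := hFc.continuousOn
  have hderiv : ∀ x ∈ Ioo a ll, HasDerivAt F (2 * Real.sqrt (ll^2 - x^2)) x := by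
    intro x hx
    have hx1 : -ll < x := lt_of_le_of_lt ha hx.1
    have hx2 : x < ll := hx.2
    have hpos : 0 < ll^2 - x^2 := by nlinarith
    have hspos : 0 < Real.sqrt (ll^2 - x^2) := Real.sqrt_pos.2 hpos
    have hs2 : Real.sqrt (ll^2 - x^2)^2 = ll^2 - x^2 := Real.sq_sqrt hpos.le
    have hin : HasDerivAt (fun y : ℝ => ll^2 - y^2) (-(2*x)) x := by
      simpa using (hasDerivAt_pow 2 x).const_sub (ll^2)
    have hsqrt : HasDerivAt (fun y : ℝ => Real.sqrt (ll^2 - y^2))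
        (1 / (2 * Real.sqrt (ll^2 - x^2)) * (-(2*x))) x :=
      (Real.hasDerivAt_sqrt hpos.ne').comp x hin
    have hdiv : HasDerivAt (fun y : ℝ => y / ll) (1/ll) x := by
      simpa using (hasDerivAt_id x).div_const ll
    have h1 : x / ll ≠ -1 := by
      intro h
      rw [div_eq_iff hl.ne'] at h
      nlinarith
    have h2 : x / ll ≠ 1 := by
      intro h
      rw [div_eq_iff hl.ne'] at h
      nlinarith
    have harc : HasDerivAt (fun y : ℝ => Real.arcsin (y/ll))
        (1 / Real.sqrt (1 - (x/ll)^2) * (1/ll)) x :=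
      by have := (Real.hasDerivAt_arcsin h1 h2).comp x hdiv; exact this
    have hmul := (hasDerivAt_id x).mul hsqrt
    have htot := hmul.add (harc.const_mul (ll^2))
    have hsq1 : Real.sqrt (1 - (x/ll)^2) = Real.sqrt (ll^2 - x^2) / ll := by
      rw [show 1 - (x/ll)^2 = (ll^2 - x^2)/ll^2 by field_simp,
        Real.sqrt_div hpos.le, Real.sqrt_sq hl.le]
    rw [hsq1] at htot
    refine htot.congr_deriv (Eq.symm ?_)
    simp only [id_eq, one_mul]
    field_simp
    linear_combination hs2
  have hint : IntervalIntegrable (fun x => 2 * Real.sqrt (ll^2 - x^2)) volume a ll :=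
    (Continuous.intervalIntegrable (by
      exact continuous_const.mul (Real.continuous_sqrt.comp (by fun_prop)))) a ll
  rw [intervalIntegral.integral_eq_sub_of_hasDeriv_right_of_le ha' hcont (fun x hx => (hderiv x hx).hasDerivWithinAt) hint]
  have hFl : F ll = ll^2 * (π/2) := by
    simp only [hF]
    rw [show ll^2 - ll^2 = 0 by ring, Real.sqrt_zero, div_self hl.ne', Real.arcsin_one]
    ring
  rw [hFl]

noncomputable def rotL (θ : ℝ) : (ℝ × ℝ) →ₗ[ℝ] (ℝ × ℝ) where
  toFun p := (Real.cos θ * p.1 - Real.sin θ * p.2, Real.sin θ * p.1 + Real.cos θ * p.2)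
  map_add' p q := by simp only [Prod.fst_add, Prod.snd_add, Prod.mk_add_mk, Prod.mk.injEq]
                     constructor <;> ring
  map_smul' c p := by simp only [Prod.smul_fst, Prod.smul_snd, smul_eq_mul, RingHom.id_apply,
                        Prod.smul_mk, Prod.mk.injEq]
                      constructor <;> ring

lemma det_rotL (θ : ℝ) : LinearMap.det (rotL θ) = 1 := by
  rw [← LinearMap.det_toMatrix (Module.Basis.finTwoProd ℝ), Matrix.det_fin_two]
  simp only [LinearMap.toMatrix_apply, Module.Basis.coe_finTwoProd_repr, Module.Basis.finTwoProd_zero,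
    Module.Basis.finTwoProd_one, rotL, LinearMap.coe_mk, AddHom.coe_mk]
  simp only [Matrix.cons_val_zero, Matrix.cons_val_one, Matrix.head_cons]
  nlinarith [Real.sin_sq_add_cos_sq θ]

def Sk (ll : ℝ) (k : ℤ) : Set (ℝ × ℝ) := {p | p.1^2 + p.2^2 ≤ ll^2 ∧ 1 < dott (nrm k) p}

lemma measurableSet_Sk (ll : ℝ) (k : ℤ) : MeasurableSet (Sk ll k) := by
  have : Sk ll k = Dset ll ∩ {p : ℝ × ℝ | 1 < dott (nrm k) p} := rfl
  rw [this]
  exact (measurableSet_Dset ll).inter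
    (measurableSet_lt measurable_const (by unfold dott; fun_prop))

lemma Sk_eq_image (ll : ℝ) (k : ℤ) :
    Sk ll k = rotL ((k : ℝ) * (π/3) + π/6) '' Sseg ll 1 := by
  set θ := (k : ℝ) * (π/3) + π/6 with hθ
  have hpyth := Real.sin_sq_add_cos_sq θ
  have hn : nrm k = (Real.cos θ, Real.sin θ) := rfl
  ext p
  constructor
  · rintro ⟨hpD, hpd⟩
    refine ⟨(Real.cos θ * p.1 + Real.sin θ * p.2, -Real.sin θ * p.1 + Real.cos θ * p.2), ⟨?_, ?_⟩, ?_⟩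
    · simp only
      nlinarith
    · simp only
      rw [hn] at hpd
      unfold dott at hpd
      simpa using hpd
    · show (_, _) = p
      simp only
      apply Prod.ext <;> simp only
      · linear_combination p.1 * hpyth
      · linear_combination p.2 * hpyth
  · rintro ⟨q, ⟨hq1, hq2⟩, rfl⟩
    constructor
    · show (Real.cos θ * q.1 - Real.sin θ * q.2)^2 + (Real.sin θ * q.1 + Real.cos θ * q.2)^2 ≤ ll^2
      nlinarith
    · show 1 < dott (nrm k) _
      rw [hn]
      unfold dott
      simp only [rotL, LinearMap.coe_mk, AddHom.coe_mk]
      have he : Real.cos θ * (Real.cos θ * q.1 - Real.sin θ * q.2)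
          + Real.sin θ * (Real.sin θ * q.1 + Real.cos θ * q.2) = q.1 := by
        linear_combination q.1 * hpyth
      rw [he]
      exact hq2

lemma volume_Sk (ll : ℝ) (k : ℤ) : volume (Sk ll k) = volume (Sseg ll 1) := by
  rw [Sk_eq_image, Measure.addHaar_image_linearMap, det_rotL]
  simp

lemma Sk_disjoint (ll : ℝ) (hll0 : 0 < ll) (hll2 : ll < 2 / Real.sqrt 3)
    (k m : Fin 6) (hkm : k ≠ m) : Disjoint (Sk ll (k : ℤ)) (Sk ll (m : ℤ)) := by
  rw [Set.disjoint_left]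
  rintro p ⟨hpD, hpk⟩ ⟨_, hpm⟩
  have hmod : ((k : ℤ) - (m : ℤ)) % 6 ≠ 0 := by
    have hk6 : (k : ℕ) < 6 := k.isLt
    have hm6 : (m : ℕ) < 6 := m.isLt
    have : (k : ℕ) ≠ (m : ℕ) := fun h => hkm (Fin.ext h)
    omega
  have hd : dott (nrm (k : ℤ)) (nrm (m : ℤ)) ≤ 1/2 := by
    rw [dott_nrm_nrm]
    exact cos_ne_zero_mod_six _ hmod
  have hll2' : ll^2 < 4/3 := by
    have h3 : ll * Real.sqrt 3 < 2 := by
      rw [div_eq_mul_inv] at hll2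
      calc ll * Real.sqrt 3 < 2 * (Real.sqrt 3)⁻¹ * Real.sqrt 3 := by
            apply mul_lt_mul_of_pos_right hll2 sqrt3_pos
        _ = 2 := by field_simp
    nlinarith [sq_sqrt3, sqrt3_pos]
  have hk1 := Real.sin_sq_add_cos_sq (((k : ℤ) : ℝ) * (π/3) + π/6)
  have hm1 := Real.sin_sq_add_cos_sq (((m : ℤ) : ℝ) * (π/3) + π/6)
  unfold dott nrm at hpk hpm hd
  dsimp only at hpk hpm hd
  set a1 := Real.cos (((k : ℤ) : ℝ) * (π/3) + π/6)
  set a2 := Real.sin (((k : ℤ) : ℝ) * (π/3) + π/6)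
  set b1 := Real.cos (((m : ℤ) : ℝ) * (π/3) + π/6)
  set b2 := Real.sin (((m : ℤ) : ℝ) * (π/3) + π/6)
  have hCS : ((a1+b1) * p.1 + (a2+b2) * p.2)^2
      ≤ ((a1+b1)^2 + (a2+b2)^2) * (p.1^2 + p.2^2) := by
    nlinarith [sq_nonneg ((a1+b1)*p.2 - (a2+b2)*p.1)]
  have hup : 2 < (a1+b1) * p.1 + (a2+b2) * p.2 := by linarith
  have hu3 : (a1+b1)^2 + (a2+b2)^2 ≤ 3 := by nlinarith
  have hp0 : 0 ≤ p.1^2 + p.2^2 := by positivity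
  nlinarith [hCS, hup, hu3, hp0, hpD, hll2', mul_le_mul hu3 hpD hp0 (by norm_num : (0:ℝ) ≤ 3)]

lemma Hhull_inter_Dset (ll : ℝ) :
    Hhull ∩ Dset ll = Dset ll \ ⋃ k : Fin 6, Sk ll (k : ℤ) := by
  rw [Hhull_eq_iInter]
  ext p
  simp only [mem_inter_iff, mem_iInter, mem_setOf_eq, mem_diff, mem_iUnion, not_exists,
    Sk, Dset, not_and, not_lt]
  constructor
  · rintro ⟨h1, h2⟩
    exact ⟨h2, fun k _ => h1 k⟩
  · rintro ⟨h2, h1⟩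
    exact ⟨fun k => h1 k h2, h2⟩

lemma volume_Dset (ll : ℝ) (hl : 0 < ll) : volume (Dset ll) = ENNReal.ofReal (ll^2 * π) := by
  have hseg : volume (Sseg ll (-ll)) = ENNReal.ofReal (ll^2 * π) := by
    rw [volume_Sseg_integral ll (-ll) hl (le_refl _) (by linarith),
      integral_sqrt_seg ll (-ll) hl (le_refl _) (by linarith)]
    rw [show ll^2 - (-ll)^2 = 0 by ring, Real.sqrt_zero,
      show -ll/ll = -1 by field_simp, Real.arcsin_neg, Real.arcsin_one]
    ring_nf
  have hsub : Dset ll ⊆ Sseg ll (-ll) ∪ {((-ll : ℝ), (0:ℝ))} := by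
    intro p hp
    rcases lt_or_ge (-ll) p.1 with h | h
    · exact Or.inl ⟨hp, h⟩
    · right
      have hp' : p.1^2 + p.2^2 ≤ ll^2 := hp
      have h1 : p.1 = -ll := by nlinarith
      have h2 : p.2 = 0 := by nlinarith
      simp [Prod.ext_iff, h1, h2]
  have hzero : volume ({((-ll : ℝ), (0:ℝ))} : Set (ℝ × ℝ)) = 0 := by
    rw [show ({((-ll : ℝ), (0:ℝ))} : Set (ℝ × ℝ)) = {(-ll : ℝ)} ×ˢ {(0:ℝ)} by
      rw [Set.singleton_prod_singleton], Measure.volume_eq_prod, Measure.prod_prod]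
    simp [Real.volume_singleton]
  apply le_antisymm
  · calc volume (Dset ll) ≤ volume (Sseg ll (-ll) ∪ {((-ll : ℝ), (0:ℝ))}) := measure_mono hsub
      _ ≤ volume (Sseg ll (-ll)) + volume ({((-ll : ℝ), (0:ℝ))} : Set (ℝ × ℝ)) := measure_union_le _ _
      _ = ENNReal.ofReal (ll^2 * π) := by rw [hseg, hzero, add_zero]
  · rw [← hseg]
    exact measure_mono fun p hp => hp.1

noncomputable def ψl : EuclideanSpace ℝ (Fin 2) ≃ₗ[ℝ] ℝ × ℝ :=
  (WithLp.linearEquiv 2 ℝ (Fin 2 → ℝ)).trans (LinearEquiv.finTwoArrow ℝ ℝ)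

noncomputable def ψm : EuclideanSpace ℝ (Fin 2) ≃ᵐ ℝ × ℝ :=
  (MeasurableEquiv.toLp 2 (Fin 2 → ℝ)).symm.trans (MeasurableEquiv.finTwoArrow)

lemma ψm_eq_ψl : (⇑ψm : EuclideanSpace ℝ (Fin 2) → ℝ × ℝ) = ⇑ψl := rfl

lemma ψm_measurePreserving : MeasurePreserving (⇑ψm) volume volume :=
  (volume_preserving_finTwoArrow ℝ).comp
    (EuclideanSpace.volume_preserving_symm_measurableEquiv_toLp (Fin 2))

lemma ψl_apply (x : EuclideanSpace ℝ (Fin 2)) : ψl x = (x 0, x 1) := rfl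

lemma preimage_Dset (ll : ℝ) (hll : 0 < ll) :
    ⇑ψl ⁻¹' (Dset ll) = closedBall (0 : EuclideanSpace ℝ (Fin 2)) ll := by
  ext x
  rw [Set.mem_preimage, mem_closedBall, dist_zero_right, ψl_apply]
  have hnorm : ‖x‖ = Real.sqrt (x 0 ^ 2 + x 1 ^ 2) := by
    rw [EuclideanSpace.norm_eq]
    congr 1
    rw [Fin.sum_univ_two]
    simp [sq_abs]
  rw [hnorm]
  have hs : (0:ℝ) ≤ x 0 ^ 2 + x 1 ^ 2 := by positivity
  constructor
  · intro h
    have h' : x 0 ^ 2 + x 1 ^ 2 ≤ ll ^ 2 := h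
    have : Real.sqrt (x 0 ^ 2 + x 1 ^ 2) ≤ Real.sqrt (ll^2) :=
      Real.sqrt_le_sqrt h'
    rwa [Real.sqrt_sq hll.le] at this
  · intro h
    have h2 := Real.sq_sqrt hs
    show x 0 ^ 2 + x 1 ^ 2 ≤ ll ^ 2
    nlinarith [Real.sqrt_nonneg (x 0 ^ 2 + x 1 ^ 2)]

lemma preimage_Hhull : ⇑ψl ⁻¹' Hhull = regularHexagon := by
  have hcomp : (⇑ψl ∘ fun k : Fin 6 =>
      (WithLp.equiv 2 (Fin 2 → ℝ)).symm
        ![2 / Real.sqrt 3 * Real.cos ((k : ℝ) * (Real.pi / 3)),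
          2 / Real.sqrt 3 * Real.sin ((k : ℝ) * (Real.pi / 3))]) = Vfin := by
    funext k
    show ψl _ = Vfin k
    rw [ψl_apply]
    unfold Vfin vtx RR
    have hc : ((k : ℤ) : ℝ) = (k : ℝ) := by push_cast; ring
    apply Prod.ext <;> simp [hc]
  have himg : ⇑ψl '' regularHexagon = Hhull := by
    rw [regularHexagon]
    rw [show (⇑ψl : EuclideanSpace ℝ (Fin 2) → ℝ × ℝ) = ⇑ψl.toLinearMap from rfl]
    rw [ψl.toLinearMap.image_convexHull]
    unfold Hhull
    rw [show (⇑ψl.toLinearMap : EuclideanSpace ℝ (Fin 2) → ℝ × ℝ) = ⇑ψl from rfl,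
      ← Set.range_comp, hcomp]
  rw [← himg, Set.preimage_image_eq _ ψl.injective]

lemma measurableSet_Hhull : MeasurableSet Hhull :=
  ((Set.finite_range Vfin).isCompact_convexHull (𝕜 := ℝ)).isClosed.measurableSet

end HexAux

open HexAux

/-- For `1 < ℓ < 2/√3`, the area of the intersection of the regular hexagon `H` circumscribed
about the unit disk with the concentric disk of radius `ℓ` is
`ℓ²(π - 6·arccos(1/ℓ)) + 6√(ℓ² - 1)`. -/
theorem area_hexagon_inter_disk (ll : ℝ) (hll1 : 1 < ll) (hll2 : ll < 2 / Real.sqrt 3) :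
    (volume (regularHexagon ∩ closedBall (0 : EuclideanSpace ℝ (Fin 2)) ll)).toReal =
      ll ^ 2 * (Real.pi - 6 * Real.arccos (1 / ll)) + 6 * Real.sqrt (ll ^ 2 - 1) := by
  have hll0 : 0 < ll := by linarith
  set I : ℝ := ll^2 * (π/2) - (1 * Real.sqrt (ll^2 - 1^2) + ll^2 * Real.arcsin (1/ll)) with hIdef
  have hIeq : ∫ x in (1:ℝ)..ll, 2 * Real.sqrt (ll^2 - x^2) = I :=
    integral_sqrt_seg ll 1 hll0 (by linarith) hll1.le
  have hI0 : 0 ≤ I := by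
    rw [← hIeq]
    apply intervalIntegral.integral_nonneg hll1.le
    intro x _
    positivity
  have hSseg : volume (Sseg ll 1) = ENNReal.ofReal I := by
    rw [volume_Sseg_integral ll 1 hll0 (by linarith) hll1.le, hIeq]
  -- transfer to ℝ × ℝ
  have hset : regularHexagon ∩ closedBall (0 : EuclideanSpace ℝ (Fin 2)) ll
      = ⇑ψm ⁻¹' (Hhull ∩ Dset ll) := by
    rw [Set.preimage_inter, ψm_eq_ψl, preimage_Hhull, preimage_Dset ll hll0]
  have hmeas : MeasurableSet (Hhull ∩ Dset ll) :=
    measurableSet_Hhull.inter (measurableSet_Dset ll)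
  rw [hset, ψm_measurePreserving.measure_preimage hmeas.nullMeasurableSet]
  rw [Hhull_inter_Dset]
  have hsub : (⋃ k : Fin 6, Sk ll (k : ℤ)) ⊆ Dset ll :=
    Set.iUnion_subset fun k p hp => hp.1
  have hUnion : volume (⋃ k : Fin 6, Sk ll (k : ℤ)) = 6 * ENNReal.ofReal I := by
    rw [measure_iUnion (fun k m hkm => Sk_disjoint ll hll0 hll2 k m hkm)
      (fun k => measurableSet_Sk ll (k : ℤ))]
    rw [tsum_fintype]
    have : ∀ k : Fin 6, volume (Sk ll (k : ℤ)) = ENNReal.ofReal I := fun k => by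
      rw [volume_Sk, hSseg]
    simp only [this, Finset.sum_const, Finset.card_univ, Fintype.card_fin, nsmul_eq_mul]
    norm_num
  have hD : volume (Dset ll) = ENNReal.ofReal (ll^2 * π) := volume_Dset ll hll0
  rw [measure_diff hsub (MeasurableSet.iUnion fun (k : Fin 6) =>
    measurableSet_Sk ll ((k : ℤ))).nullMeasurableSet
    (by rw [hUnion]; exact ENNReal.mul_ne_top (by norm_num) ENNReal.ofReal_ne_top)]
  rw [ENNReal.toReal_sub_of_le (measure_mono hsub) (by rw [hD]; exact ENNReal.ofReal_ne_top)]
  rw [hD, hUnion, ENNReal.toReal_mul, ENNReal.toReal_ofReal (by positivity),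
    ENNReal.toReal_ofReal hI0]
  have harccos : Real.arccos (1/ll) = π/2 - Real.arcsin (1/ll) := Real.arccos_eq_pi_div_two_sub_arcsin _
  rw [harccos, hIdef]
  norm_num
  ring
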